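/- The series ∑_{m=1}^∞ ((2s+1)/((m+s+1)·2·4^m) · binomial(2m, m-s))² converges for every integer s ≥ 0, and for s = 1 (i.e., n = 3) its value together with the m = 0 term equals 236/(3π) - 25; that is, ∑_{m=0}^∞ (r(3, 2m+1))² = 236/(3π) - 25 where r(3,2m+1) = 3/((m+2)·2·4^m)·binomial(2m, m-1). -/

import Mathlib

open Real

set_option maxHeartbeats 1000000

section aux16
open Filter Finset

/-- normalized central binomial coefficient `C(2m,m)/4^m` -/
noncomputable def cb16 (m : ℕ) : ℝ := (Nat.centralBinom m : ℝ) / 4 ^ m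

/-- the rational telescoping weight -/
noncomputable def R16 (m : ℕ) : ℝ :=
  -(236 * (m : ℝ) ^ 5 + 1475 * m ^ 4 + 3426 * m ^ 3 + 3631 * m ^ 2 + 1732 * m + 300) /
    (3 * ((m : ℝ) + 1) ^ 2 * ((m : ℝ) + 2) ^ 2)

/-- the telescoping sequence -/
noncomputable def g16 (m : ℕ) : ℝ := R16 m * cb16 m ^ 2

lemma cb16_pos (m : ℕ) : 0 < cb16 m := by
  have h := Nat.centralBinom_pos m
  have : (0 : ℝ) < (Nat.centralBinom m : ℝ) := by exact_mod_cast h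
  exact div_pos this (by positivity)

lemma cb16_zero : cb16 0 = 1 := by simp [cb16, Nat.centralBinom_zero]

lemma cb16_succ (m : ℕ) : cb16 (m + 1) * (2 * (m : ℝ) + 2) = cb16 m * (2 * m + 1) := by
  have h := Nat.succ_mul_centralBinom_succ m
  have h' : ((m : ℝ) + 1) * (Nat.centralBinom (m + 1) : ℝ) =
      2 * (2 * m + 1) * (Nat.centralBinom m : ℝ) := by exact_mod_cast h
  have h4 : (4 : ℝ) ^ (m + 1) = 4 * 4 ^ m := by ring
  have hp : (0 : ℝ) < 4 ^ m := by positivity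
  simp only [cb16, h4]
  field_simp
  nlinarith [h', hp]

lemma cb16_succ' (m : ℕ) : cb16 (m + 1) = cb16 m * (2 * m + 1) / (2 * (m : ℝ) + 2) := by
  have h := cb16_succ m
  field_simp
  linarith [h]

/-- Wallis product identity: partial Wallis product times `(2k+1)·cb k²` equals 1. -/
lemma wallis_cb16 (k : ℕ) :
    (∏ i ∈ range k, ((2 : ℝ) * i + 2) / (2 * i + 1) * ((2 * i + 2) / (2 * i + 3))) *
      ((2 * (k : ℝ) + 1) * cb16 k ^ 2) = 1 := by
  induction k with
  | zero => simp [cb16_zero]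
  | succ k ih =>
    rw [prod_range_succ, cb16_succ']
    have h1 : (2 * (k : ℝ) + 1) ≠ 0 := by positivity
    have h2 : (2 * (k : ℝ) + 2) ≠ 0 := by positivity
    have h3 : (2 * (k : ℝ) + 3) ≠ 0 := by positivity
    set P := ∏ i ∈ range k, ((2 : ℝ) * i + 2) / (2 * i + 1) * ((2 * i + 2) / (2 * i + 3)) with hP
    set c := cb16 k with hc
    push_cast
    have key : P * ((2 * (k : ℝ) + 2) / (2 * k + 1) * ((2 * k + 2) / (2 * k + 3))) *
        ((2 * ((k : ℝ) + 1) + 1) * (c * (2 * k + 1) / (2 * k + 2)) ^ 2) =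
        P * ((2 * (k : ℝ) + 1) * c ^ 2) := by
      have h3' : (2 * (k : ℝ) + 3) = 2 * ((k : ℝ) + 1) + 1 := by ring
      field_simp
      ring
    rw [key]
    exact ih

lemma tendsto_h16 :
    Tendsto (fun k : ℕ => (2 * (k : ℝ) + 1) * cb16 k ^ 2) atTop (nhds (2 / π)) := by
  have hW := Real.tendsto_prod_pi_div_two
  have hne : (π / 2 : ℝ) ≠ 0 := by positivity
  have hinv := hW.inv₀ hne
  have : (π / 2 : ℝ)⁻¹ = 2 / π := by
    rw [inv_div]
  rw [this] at hinv
  refine hinv.congr fun k => ?_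
  have h := wallis_cb16 k
  have hprod : (∏ i ∈ range k, ((2 : ℝ) * i + 2) / (2 * i + 1) * ((2 * i + 2) / (2 * i + 3))) ≠ 0 := by
    refine prod_ne_zero_iff.2 fun i _ => ?_
    have : (0:ℝ) < (2 * (i:ℝ) + 2) / (2 * i + 1) * ((2 * i + 2) / (2 * i + 3)) := by positivity
    exact ne_of_gt this
  exact inv_eq_of_mul_eq_one_right h

/-- the rational factor rewritten as a continuous function of `1/(m+1)` -/
noncomputable def G16 (t : ℝ) : ℝ :=
  -(236 * (1 - t) ^ 5 + 1475 * (1 - t) ^ 4 * t + 3426 * (1 - t) ^ 3 * t ^ 2 +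
      3631 * (1 - t) ^ 2 * t ^ 3 + 1732 * (1 - t) * t ^ 4 + 300 * t ^ 5) /
    (3 * (2 - t) * (1 + t) ^ 2)

lemma R16_eq (m : ℕ) : R16 m = G16 (1 / ((m : ℝ) + 1)) * (2 * m + 1) := by
  have h1 : ((m : ℝ) + 1) ≠ 0 := by positivity
  have h2 : ((m : ℝ) + 2) ≠ 0 := by positivity
  have h5 : (2 * (m : ℝ) + 1) ≠ 0 := by positivity
  have e1 : 1 - 1 / ((m : ℝ) + 1) = (m : ℝ) / ((m : ℝ) + 1) := by
    field_simp
    ring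
  have e2 : 2 - 1 / ((m : ℝ) + 1) = (2 * (m : ℝ) + 1) / ((m : ℝ) + 1) := by
    field_simp; ring
  have e3 : 1 + 1 / ((m : ℝ) + 1) = ((m : ℝ) + 2) / ((m : ℝ) + 1) := by
    field_simp; ring
  unfold R16 G16
  rw [e1, e2, e3]
  field_simp


lemma tendsto_g16 : Tendsto g16 atTop (nhds (-(236) / (3 * π))) := by
  have hG : ContinuousAt G16 0 := by
    apply ContinuousAt.div
    · fun_prop
    · fun_prop
    · norm_num
  have ht : Tendsto (fun m : ℕ => 1 / ((m : ℝ) + 1)) atTop (nhds 0) :=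
    tendsto_one_div_add_atTop_nhds_zero_nat
  have hGc : Tendsto (fun m : ℕ => G16 (1 / ((m : ℝ) + 1))) atTop (nhds (G16 0)) :=
    (hG.tendsto).comp ht
  have hG0 : G16 0 = -118 / 3 := by norm_num [G16]
  rw [hG0] at hGc
  have := hGc.mul tendsto_h16
  have heq : (-118 / 3 : ℝ) * (2 / π) = -(236) / (3 * π) := by
    field_simp; ring
  rw [heq] at this
  refine this.congr fun m => ?_
  rw [g16, R16_eq]
  ring

lemma g16_zero : g16 0 = -25 := by
  norm_num [g16, R16, cb16_zero]

/-- the summand of the main series -/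
noncomputable def f16 (m : ℕ) : ℝ :=
  ((3 : ℝ) / (((m : ℝ) + 2) * 2 * 4 ^ m) * (if 1 ≤ m then ((2 * m).choose (m - 1) : ℝ) else 0)) ^ 2

lemma f16_eq (m : ℕ) : f16 m = g16 m - g16 (m + 1) := by
  cases m with
  | zero =>
    have h1 : cb16 1 = 1 / 2 := by
      norm_num [cb16, Nat.centralBinom]
    norm_num [f16, g16, R16, cb16_zero, h1]
  | succ k =>
    -- binomial identity : (k+2) * C(2k+2, k) = (k+1) * centralBinom (k+1)
    have hnat : (2 * (k + 1)).choose k * (k + 2) = (k + 1) * Nat.centralBinom (k + 1) := by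
      have h := Nat.choose_succ_right_eq (2 * (k + 1)) k
      have h2 : 2 * (k + 1) - k = k + 2 := by omega
      rw [h2] at h
      rw [Nat.centralBinom_eq_two_mul_choose, ← h]
      ring
    have hch : ((2 * (k + 1)).choose k : ℝ) * ((k : ℝ) + 2) =
        ((k : ℝ) + 1) * (Nat.centralBinom (k + 1) : ℝ) := by
      exact_mod_cast congrArg (Nat.cast (R := ℝ)) hnat
    -- express the choose in terms of cb16 (k+1)
    have hcbdef : (Nat.centralBinom (k + 1) : ℝ) = cb16 (k + 1) * 4 ^ (k + 1) := by
      unfold cb16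
      field_simp
    have hsub : (k + 1) - 1 = k := by omega
    have hchval : ((2 * (k + 1)).choose k : ℝ) =
        ((k : ℝ) + 1) * cb16 (k + 1) * 4 ^ (k + 1) / ((k : ℝ) + 2) := by
      rw [hcbdef] at hch
      field_simp
      nlinarith [hch]
    have hrec : cb16 (k + 2) = cb16 (k + 1) * (2 * ((k:ℝ) + 1) + 1) / (2 * ((k:ℝ) + 1) + 2) := by
      have := cb16_succ' (k + 1)
      push_cast at this ⊢
      convert this using 3 <;> push_cast <;> ring
    unfold f16 g16 R16
    rw [if_pos (by omega), hsub, hchval, hrec]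
    have h1 : ((k : ℝ) + 1) ≠ 0 := by positivity
    have h2 : ((k : ℝ) + 2) ≠ 0 := by positivity
    have h3 : ((k : ℝ) + 3) ≠ 0 := by positivity
    have h4 : (2 * ((k:ℝ) + 1) + 2) ≠ 0 := by positivity
    have h5 : (4 : ℝ) ^ (k + 1) ≠ 0 := by positivity
    push_cast
    field_simp
    ring

lemma f16_nonneg (m : ℕ) : 0 ≤ f16 m := sq_nonneg _

lemma hasSum_f16 : HasSum f16 (236 / (3 * π) - 25) := by
  rw [hasSum_iff_tendsto_nat_of_nonneg f16_nonneg]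
  have hsum : ∀ n : ℕ, ∑ i ∈ range n, f16 i = g16 0 - g16 n := by
    intro n
    rw [← Finset.sum_range_sub' g16 n]
    exact Finset.sum_congr rfl fun i _ => f16_eq i
  have : Tendsto (fun n : ℕ => g16 0 - g16 n) atTop (nhds (g16 0 - -(236) / (3 * π))) :=
    tendsto_const_nhds.sub tendsto_g16
  have heq : g16 0 - -(236) / (3 * π) = 236 / (3 * π) - 25 := by
    rw [g16_zero]; ring
  rw [heq] at this
  exact this.congr fun n => (hsum n).symm

lemma summable16 (s : ℕ) : Summable (fun m : ℕ =>
    ((2 * s + 1) / (((m : ℝ) + s + 1) * 2 * 4 ^ m) *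
      (if s ≤ m then ((2 * m).choose (m - s) : ℝ) else 0)) ^ 2) := by
  have hbase : Summable (fun m : ℕ => ((2 * (s : ℝ) + 1) / 2) ^ 2 * (1 / ((m : ℝ) + 1)) ^ 2) := by
    apply Summable.mul_left
    have h0 : Summable (fun n : ℕ => 1 / (n : ℝ) ^ 2) :=
      summable_one_div_nat_pow.mpr (by norm_num)
    have h1 : Summable (fun n : ℕ => 1 / ((n : ℝ) + 1) ^ 2) := by
      have := (summable_nat_add_iff (f := fun n : ℕ => 1 / (n : ℝ) ^ 2) 1).mpr h0
      refine this.congr fun n => ?_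
      push_cast; ring
    refine h1.congr fun n => ?_
    rw [div_pow, one_pow]
  refine Summable.of_nonneg_of_le (fun m => sq_nonneg _) (fun m => ?_) hbase
  have hch : (if s ≤ m then ((2 * m).choose (m - s) : ℝ) else 0) ≤ 4 ^ m := by
    split
    · have h1 : (2 * m).choose (m - s) ≤ Nat.centralBinom m := Nat.choose_le_centralBinom _ _
      have h2 : Nat.centralBinom m ≤ 4 ^ m := by
        calc Nat.centralBinom m = (2 * m).choose m := Nat.centralBinom_eq_two_mul_choose m
          _ ≤ ∑ i ∈ range (2 * m + 1), (2 * m).choose i :=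
            Finset.single_le_sum (fun i _ => Nat.zero_le _) (by
              simp only [Finset.mem_range]; omega)
          _ = 2 ^ (2 * m) := Nat.sum_range_choose (2 * m)
          _ = 4 ^ m := by norm_num [pow_mul]
      exact_mod_cast h1.trans h2
    · positivity
  have hchnn : (0 : ℝ) ≤ (if s ≤ m then ((2 * m).choose (m - s) : ℝ) else 0) := by
    split <;> positivity
  have h4 : (0 : ℝ) < 4 ^ m := by positivity
  have hd : (0 : ℝ) < ((m : ℝ) + s + 1) * 2 * 4 ^ m := by positivity
  have hA : (0 : ℝ) ≤ (2 * (s : ℝ) + 1) / (((m : ℝ) + s + 1) * 2 * 4 ^ m) := by positivity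
  have hle : (2 * (s : ℝ) + 1) / (((m : ℝ) + s + 1) * 2 * 4 ^ m) *
      (if s ≤ m then ((2 * m).choose (m - s) : ℝ) else 0) ≤
      (2 * (s : ℝ) + 1) / 2 * (1 / ((m : ℝ) + 1)) := by
    calc (2 * (s : ℝ) + 1) / (((m : ℝ) + s + 1) * 2 * 4 ^ m) *
        (if s ≤ m then ((2 * m).choose (m - s) : ℝ) else 0)
        ≤ (2 * (s : ℝ) + 1) / (((m : ℝ) + s + 1) * 2 * 4 ^ m) * 4 ^ m :=
          mul_le_mul_of_nonneg_left hch hA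
      _ = (2 * (s : ℝ) + 1) / (((m : ℝ) + s + 1) * 2) := by
          field_simp
      _ ≤ (2 * (s : ℝ) + 1) / (((m : ℝ) + 1) * 2) := by
          apply div_le_div_of_nonneg_left (by positivity) (by positivity)
          have : (0 : ℝ) ≤ (s : ℝ) := Nat.cast_nonneg s
          nlinarith
      _ = (2 * (s : ℝ) + 1) / 2 * (1 / ((m : ℝ) + 1)) := by
          rw [div_mul_div_comm, mul_one, mul_comm ((m : ℝ) + 1) 2]
  calc ((2 * (s : ℝ) + 1) / (((m : ℝ) + s + 1) * 2 * 4 ^ m) *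
      (if s ≤ m then ((2 * m).choose (m - s) : ℝ) else 0)) ^ 2
      ≤ ((2 * (s : ℝ) + 1) / 2 * (1 / ((m : ℝ) + 1))) ^ 2 :=
        pow_le_pow_left₀ (mul_nonneg hA hchnn) hle 2
    _ = ((2 * (s : ℝ) + 1) / 2) ^ 2 * (1 / ((m : ℝ) + 1)) ^ 2 := by ring

end aux16

/-- The series `∑_m (r(2s+1, 2m+1))²` converges for every `s ≥ 0`, where
`r(2s+1,2m+1) = (2s+1)/((m+s+1)·2·4^m)·binom(2m, m-s)` (binomials with negative lower
index vanish); and for `s = 1`, i.e. level `n = 3`,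
`∑_{m=0}^∞ (r(3,2m+1))² = 236/(3π) - 25`. -/
theorem stmt_16 :
    (∀ s : ℕ, Summable (fun m : ℕ =>
      ((2 * s + 1) / ((m + s + 1) * 2 * 4 ^ m) *
        (if s ≤ m then ((2 * m).choose (m - s) : ℝ) else 0)) ^ 2)) ∧
    HasSum (fun m : ℕ =>
      ((3 : ℝ) / ((m + 2) * 2 * 4 ^ m) *
        (if 1 ≤ m then ((2 * m).choose (m - 1) : ℝ) else 0)) ^ 2)
      (236 / (3 * π) - 25) := by
  constructor
  · intro s
    have := summable16 s
    refine this.congr fun m => ?_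
    norm_num
  · exact hasSum_f16.congr_fun fun m => rfl
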